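/- Fix ε ∈ {+1,−1} and λ, u ∈ ℂ. Assume θ_{01}((λ+4εlη)/2, τ/2) ≠ 0, θ_{01}(λ/2, τ/2) ≠ 0, and that θ_{11}(η,τ), θ_{10}(η,τ), θ_{00}(η,τ), θ_{01}(η,τ) are all nonzero; set p := −θ_{00}(λ/2, τ/2)/θ_{01}(λ/2, τ/2). Then the difference operator δ := p·(W_1(u)·ρ^l(S^1) + i·W_2(u)·ρ^l(S^2)) + W_0(u)·ρ^l(S^0) − W_3(u)·ρ^l(S^3) satisfies (δ f_ε(λ,u,·))(z) = (θ_{01}((λ+4εlη)/2,τ/2)/θ_{01}(λ/2,τ/2)) · 2θ_{11}(u+2lη,τ) · f_ε(λ,u−2η,z) for every z ∈ ℂ with θ_{11}(2z,τ) ≠ 0. -/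

import Mathlib

noncomputable section

open Complex

/-- Theta function with characteristics `θ_{ab}(z,τ)`. -/
def theta (a b : ℝ) (z τ : ℂ) : ℂ :=
  ∑' n : ℤ, Complex.exp ((Real.pi : ℂ) * Complex.I * ((a : ℂ)/2 + (n : ℂ))^2 * τ +
    2 * (Real.pi : ℂ) * Complex.I * ((a : ℂ)/2 + (n : ℂ)) * ((b : ℂ)/2 + z))

/-- `[z;a]_k := ∏_{j=0}^{k-1} θ₁₁(z+a+2jη,τ) θ₁₁(-z+a+2jη,τ)`. -/
def brK (η τ z a : ℂ) (k : ℕ) : ℂ :=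
  ∏ j ∈ Finset.range k,
    theta 1 1 (z + a + 2*(j:ℂ)*η) τ * theta 1 1 (-z + a + 2*(j:ℂ)*η) τ

/-- `f_ε(λ,u,z) := [z;(ελ+u)/2+(-l+1)η]_{2l}`, with `tl = 2l`. -/
def fEps (η τ l : ℂ) (tl : ℕ) (ε lam u z : ℂ) : ℂ :=
  brK η τ z ((ε*lam + u)/2 + (-l+1)*η) tl

/-- `ω_λ(u;v)(z) := [z;(λ+u-v)/2+(-l+1)η]_{2l}`. -/
def omegaFn (η τ l : ℂ) (tl : ℕ) (lam u v z : ℂ) : ℂ :=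
  brK η τ z ((lam + u - v)/2 + (-l+1)*η) tl

def s0f (η τ z : ℂ) : ℂ := theta 1 1 η τ * theta 1 1 (2*z) τ
def s1f (η τ z : ℂ) : ℂ := theta 1 0 η τ * theta 1 0 (2*z) τ
def s2f (η τ z : ℂ) : ℂ := Complex.I * theta 0 0 η τ * theta 0 0 (2*z) τ
def s3f (η τ z : ℂ) : ℂ := theta 0 1 η τ * theta 0 1 (2*z) τ

/-- The difference operator `ρ^l(S^a)` associated to the coefficient function `s`. -/
def rhoS (η τ l : ℂ) (s : ℂ → ℂ) : (ℂ → ℂ) →ₗ[ℂ] (ℂ → ℂ) where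
  toFun f := fun z =>
    (s (z - l*η) * f (z + η) - s (-z - l*η) * f (z - η)) / theta 1 1 (2*z) τ
  map_add' f g := by
    funext z
    simp only [Pi.add_apply]
    ring
  map_smul' c f := by
    funext z
    simp only [Pi.smul_apply, smul_eq_mul, RingHom.id_apply]
    ring

def W0 (η τ u : ℂ) : ℂ := theta 1 1 u τ / theta 1 1 η τ
def W1 (η τ u : ℂ) : ℂ := theta 1 0 u τ / theta 1 0 η τ
def W2 (η τ u : ℂ) : ℂ := theta 0 0 u τ / theta 0 0 η τ
def W3 (η τ u : ℂ) : ℂ := theta 0 1 u τ / theta 0 1 η τ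

/-- `θ^{(2l)}_{00}(u) := ∏_{j=0}^{2l-1} θ₀₀(u+(2j-2l+1)η,τ)`, with `tl = 2l`. -/
def theta2l (η τ : ℂ) (tl : ℕ) (u : ℂ) : ℂ :=
  ∏ j ∈ Finset.range tl, theta 0 0 (u + (2*(j:ℂ) - (tl:ℂ) + 1)*η) τ

/-- The gauge transformation matrix `M_λ(v)`. -/
def Mlam (τ lam v : ℂ) : Matrix (Fin 2) (Fin 2) ℂ :=
  !![-theta 0 0 ((lam - v)/2) (τ/2), -theta 0 0 ((lam + v)/2) (τ/2);
     theta 0 1 ((lam - v)/2) (τ/2), theta 0 1 ((lam + v)/2) (τ/2)]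

/-- The `L`-operator as a 2×2 matrix of difference operators. -/
def LopM (η τ l u : ℂ) : Matrix (Fin 2) (Fin 2) (Module.End ℂ (ℂ → ℂ)) :=
  !![W0 η τ u • rhoS η τ l (s0f η τ) + W3 η τ u • rhoS η τ l (s3f η τ),
     W1 η τ u • rhoS η τ l (s1f η τ) - (Complex.I * W2 η τ u) • rhoS η τ l (s2f η τ);
     W1 η τ u • rhoS η τ l (s1f η τ) + (Complex.I * W2 η τ u) • rhoS η τ l (s2f η τ),
     W0 η τ u • rhoS η τ l (s0f η τ) - W3 η τ u • rhoS η τ l (s3f η τ)]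

/-- `N := adj(M_{λ₀+4(j+ε)lη}(v)) · L(u) · M_{λ₀+4jlη}(v)`. -/
def NMat (η τ l lam0 v u : ℂ) (j : ℤ) (ε : ℂ) :
    Matrix (Fin 2) (Fin 2) (Module.End ℂ (ℂ → ℂ)) :=
  ((Mlam τ (lam0 + 4*((j:ℂ)+ε)*l*η) v).adjugate).map
      (algebraMap ℂ (Module.End ℂ (ℂ → ℂ))) *
    LopM η τ l u *
    (Mlam τ (lam0 + 4*(j:ℂ)*l*η) v).map (algebraMap ℂ (Module.End ℂ (ℂ → ℂ)))

/-- The kernel `μ(z,w)` of the Sklyanin form. -/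
def muK (η τ : ℂ) (tl : ℕ) (z w : ℂ) : ℂ :=
  theta 1 1 (2*z) τ * theta 1 1 (2*w) τ /
    ∏ j ∈ Finset.range (tl + 2),
      (theta 0 0 (z + w + (2*(j:ℂ) - (tl:ℂ) - 1)*η) τ *
       theta 0 0 (z - w + (2*(j:ℂ) - (tl:ℂ) - 1)*η) τ)

/-- Integrand of the Sklyanin form. -/
def sklIntegrand (η τ : ℂ) (tl : ℕ) (f g : ℂ → ℂ) (x y : ℝ) : ℂ :=
  (starRingEnd ℂ) (f ((x:ℂ) + (y:ℂ)*Complex.I)) * g ((x:ℂ) + (y:ℂ)*Complex.I) *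
    muK η τ tl ((x:ℂ) + (y:ℂ)*Complex.I) ((x:ℂ) - (y:ℂ)*Complex.I)

/-- The Sklyanin form `⟨f,g⟩` (with `τ = i t₀`). -/
def sklForm (η τ : ℂ) (tl : ℕ) (t0 : ℝ) (f g : ℂ → ℂ) : ℂ :=
  ∫ x in (0:ℝ)..1, ∫ y in (0:ℝ)..t0, sklIntegrand η τ tl f g x y

/-- The constant `C_{2l}`. -/
def C2l (η τ : ℂ) (tl : ℕ) : ℂ :=
  (-2*η * Complex.exp (3*(Real.pi:ℂ)*Complex.I*τ/4)) /
    (theta 1 1 (2*((tl:ℂ)+1)*η) τ *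
      ∏' j : ℕ, (1 - Complex.exp (2*(Real.pi:ℂ)*Complex.I*((j:ℂ)+1)*τ))^3)
namespace SklyaninAux

def thTerm (a b : ℝ) (z τ : ℂ) (n : ℤ) : ℂ :=
  Complex.exp ((Real.pi : ℂ) * Complex.I * ((a : ℂ)/2 + (n : ℂ))^2 * τ +
    2 * (Real.pi : ℂ) * Complex.I * ((a : ℂ)/2 + (n : ℂ)) * ((b : ℂ)/2 + z))

lemma theta_eq_tsum (a b : ℝ) (z τ : ℂ) : theta a b z τ = ∑' n : ℤ, thTerm a b z τ n := rfl

lemma summable_norm_jacobi {τ : ℂ} (hτ : 0 < τ.im) (w : ℂ) :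
    Summable fun n : ℤ => ‖jacobiTheta₂_term n w τ‖ := by
  have h := summable_pow_mul_jacobiTheta₂_term_bound |w.im| hτ 0
  refine Summable.of_nonneg_of_le (fun _ => norm_nonneg _)
    (fun n => norm_jacobiTheta₂_term_le hτ (le_refl |w.im|) (le_refl τ.im) n) ?_
  simpa using h

lemma thTerm_eq_jacobi (a b : ℝ) (z τ : ℂ) (n : ℤ) :
    thTerm a b z τ n = Complex.exp ((Real.pi : ℂ) * Complex.I * ((a:ℂ)/2)^2 * τ +
        2 * (Real.pi : ℂ) * Complex.I * ((a:ℂ)/2) * ((b:ℂ)/2 + z)) *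
      jacobiTheta₂_term n ((b:ℂ)/2 + z + (a:ℂ)/2 * τ) τ := by
  rw [thTerm, jacobiTheta₂_term, ← Complex.exp_add]
  congr 1
  push_cast
  ring

lemma summable_norm_thTerm {τ : ℂ} (hτ : 0 < τ.im) (a b : ℝ) (z : ℂ) :
    Summable fun n : ℤ => ‖thTerm a b z τ n‖ := by
  simp_rw [thTerm_eq_jacobi, norm_mul]
  exact (summable_norm_jacobi hτ _).mul_left _

lemma theta_mul (a b a' b' : ℝ) (x y : ℂ) {τ : ℂ} (hτ : 0 < τ.im) :
    theta a b x τ * theta a' b' y τ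
      = ∑' p : ℤ × ℤ, thTerm a b x τ p.1 * thTerm a' b' y τ p.2 := by
  rw [theta_eq_tsum, theta_eq_tsum]
  exact tsum_mul_tsum_of_summable_norm (summable_norm_thTerm hτ a b x)
    (summable_norm_thTerm hτ a' b' y)

lemma cexp_eq_cexp {A B : ℂ} (m : ℤ) (h : A = B + 2*(m:ℂ)*((Real.pi:ℂ)*Complex.I)) :
    Complex.exp A = Complex.exp B := by
  rw [Complex.exp_eq_exp_iff_exists_int]
  exact ⟨m, by rw [h]; ring⟩

lemma cexp_eq_neg_cexp {A B : ℂ} (m : ℤ)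
    (h : A = B + (2*(m:ℂ)+1)*((Real.pi:ℂ)*Complex.I)) :
    Complex.exp A = -Complex.exp B := by
  have hB : -Complex.exp B = Complex.exp (B + (Real.pi:ℂ)*Complex.I) := by
    rw [Complex.exp_add, Complex.exp_pi_mul_I]; ring
  rw [hB, Complex.exp_eq_exp_iff_exists_int]
  exact ⟨m, by rw [h]; ring⟩

def ψe (q : ℤ × ℤ) : ℤ × ℤ := (q.1 + q.2, q.1 - q.2)
def ψo (q : ℤ × ℤ) : ℤ × ℤ := (q.1 + q.2 + 1, q.1 - q.2)

lemma ψe_inj : Function.Injective ψe := by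
  rintro ⟨a, b⟩ ⟨c, d⟩ h
  simp only [ψe, Prod.mk.injEq] at h
  obtain ⟨h1, h2⟩ := h
  exact Prod.ext (by omega) (by omega)

lemma ψo_inj : Function.Injective ψo := by
  rintro ⟨a, b⟩ ⟨c, d⟩ h
  simp only [ψo, Prod.mk.injEq] at h
  obtain ⟨h1, h2⟩ := h
  exact Prod.ext (by omega) (by omega)

lemma isCompl_ranges : IsCompl (Set.range ψe) (Set.range ψo) := by
  constructor
  · rw [Set.disjoint_left]
    rintro p ⟨⟨m, n⟩, rfl⟩ ⟨⟨m', n'⟩, h⟩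
    simp only [ψe, ψo, Prod.mk.injEq] at h
    omega
  · rw [codisjoint_iff]
    refine Set.eq_univ_of_forall fun p => ?_
    obtain ⟨r, s⟩ := p
    have : (r, s) ∈ Set.range ψe ∪ Set.range ψo := ?_
    · exact this
    rw [Set.mem_union]
    by_cases h : (r + s) % 2 = 0
    · exact Or.inl ⟨((r+s)/2, (r-s)/2), by simp only [ψe, Prod.mk.injEq]; omega⟩
    · exact Or.inr ⟨((r+s-1)/2, (r-s-1)/2), by simp only [ψo, Prod.mk.injEq]; omega⟩

lemma tsum_split (G : ℤ × ℤ → ℂ) (hG : Summable G) :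
    ∑' p, G p = (∑' q, G (ψe q)) + ∑' q, G (ψo q) := by
  have h1 : HasSum (fun q => G (ψe q)) (∑' q, G (ψe q)) :=
    (hG.comp_injective ψe_inj).hasSum
  have h2 : HasSum (fun q => G (ψo q)) (∑' q, G (ψo q)) :=
    (hG.comp_injective ψo_inj).hasSum
  exact (((ψe_inj.hasSum_range_iff).mpr h1).add_isCompl isCompl_ranges
    ((ψo_inj.hasSum_range_iff).mpr h2)).tsum_eq



lemma im_half {τ : ℂ} (hτ : 0 < τ.im) : 0 < (τ/2).im := by
  have h : τ/2 = ((1/2 : ℝ) : ℂ) * τ := by push_cast; ring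
  rw [h, Complex.im_ofReal_mul]
  linarith

/-! Pointwise exponential identities. -/

lemma pwI_even {τ : ℂ} (x y : ℂ) (m n : ℤ) :
    thTerm 0 1 ((x+y)/2) (τ/2) (m+n) * thTerm 0 1 ((x-y)/2) (τ/2) (m-n)
      = thTerm 0 0 x τ m * thTerm 0 0 y τ n := by
  simp only [thTerm, ← Complex.exp_add]
  refine cexp_eq_cexp m ?_
  push_cast; ring

lemma pwI_odd {τ : ℂ} (x y : ℂ) (m n : ℤ) :
    thTerm 0 1 ((x+y)/2) (τ/2) (m+n+1) * thTerm 0 1 ((x-y)/2) (τ/2) (m-n)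
      = -(thTerm 1 0 x τ m * thTerm 1 0 y τ n) := by
  simp only [thTerm, ← Complex.exp_add]
  refine cexp_eq_neg_cexp m ?_
  push_cast; ring

lemma pwII_even {τ : ℂ} (x y : ℂ) (m n : ℤ) :
    thTerm 0 0 ((x+y)/2) (τ/2) (m+n) * thTerm 0 1 ((x-y)/2) (τ/2) (m-n)
      = thTerm 0 1 x τ m * thTerm 0 1 y τ n := by
  simp only [thTerm, ← Complex.exp_add]
  refine cexp_eq_cexp (-n) ?_
  push_cast; ring

lemma pwII_odd {τ : ℂ} (x y : ℂ) (m n : ℤ) :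
    thTerm 0 0 ((x+y)/2) (τ/2) (m+n+1) * thTerm 0 1 ((x-y)/2) (τ/2) (m-n)
      = -(thTerm 1 1 x τ m * thTerm 1 1 y τ n) := by
  simp only [thTerm, ← Complex.exp_add]
  refine cexp_eq_neg_cexp (-(n+1)) ?_
  push_cast; ring

lemma pwIII_even {τ : ℂ} (x y : ℂ) (m n : ℤ) :
    thTerm 0 1 ((x+y)/2) (τ/2) (m+n) * thTerm 0 0 ((x-y)/2) (τ/2) (m-n)
      = thTerm 0 0 ((x+y)/2) (τ/2) (m+n) * thTerm 0 1 ((x-y)/2) (τ/2) (m-n) := by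
  simp only [thTerm, ← Complex.exp_add]
  refine cexp_eq_cexp n ?_
  push_cast; ring

lemma pwIII_odd1 {τ : ℂ} (x y : ℂ) (m n : ℤ) :
    thTerm 0 1 ((x+y)/2) (τ/2) (m+n+1) * thTerm 0 0 ((x-y)/2) (τ/2) (m-n)
      = thTerm 1 1 x τ m * thTerm 1 1 y τ n := by
  simp only [thTerm, ← Complex.exp_add]
  refine cexp_eq_cexp 0 ?_
  push_cast; ring

lemma pwIII_odd2 {τ : ℂ} (x y : ℂ) (m n : ℤ) :
    thTerm 0 0 ((x+y)/2) (τ/2) (m+n+1) * thTerm 0 1 ((x-y)/2) (τ/2) (m-n)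
      = -(thTerm 1 1 x τ m * thTerm 1 1 y τ n) := by
  simp only [thTerm, ← Complex.exp_add]
  refine cexp_eq_neg_cexp (-(n+1)) ?_
  push_cast; ring

/-- Identity (I). -/
lemma idI {τ : ℂ} (hτ : 0 < τ.im) (x y : ℂ) :
    theta 1 0 x τ * theta 1 0 y τ - theta 0 0 x τ * theta 0 0 y τ
      = -(theta 0 1 ((x+y)/2) (τ/2) * theta 0 1 ((x-y)/2) (τ/2)) := by
  have hσ : 0 < (τ/2).im := im_half hτ
  set G : ℤ × ℤ → ℂ := fun p =>
    thTerm 0 1 ((x+y)/2) (τ/2) p.1 * thTerm 0 1 ((x-y)/2) (τ/2) p.2 with hGdef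
  have hG : Summable G :=
    summable_mul_of_summable_norm (summable_norm_thTerm hσ 0 1 ((x+y)/2))
      (summable_norm_thTerm hσ 0 1 ((x-y)/2))
  have hsplit := tsum_split G hG
  have hE : ∑' q : ℤ × ℤ, G (ψe q) = theta 0 0 x τ * theta 0 0 y τ := by
    rw [theta_mul 0 0 0 0 x y hτ]
    exact tsum_congr fun q => pwI_even x y q.1 q.2
  have hO : ∑' q : ℤ × ℤ, G (ψo q) = -(theta 1 0 x τ * theta 1 0 y τ) := by
    rw [theta_mul 1 0 1 0 x y hτ, ← tsum_neg]
    exact tsum_congr fun q => pwI_odd x y q.1 q.2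
  have hL : ∑' p : ℤ × ℤ, G p
      = theta 0 1 ((x+y)/2) (τ/2) * theta 0 1 ((x-y)/2) (τ/2) :=
    (theta_mul 0 1 0 1 ((x+y)/2) ((x-y)/2) hσ).symm
  rw [hE, hO] at hsplit
  linear_combination hsplit - hL

/-- Identity (II). -/
lemma idII {τ : ℂ} (hτ : 0 < τ.im) (x y : ℂ) :
    theta 1 1 x τ * theta 1 1 y τ - theta 0 1 x τ * theta 0 1 y τ
      = -(theta 0 0 ((x+y)/2) (τ/2) * theta 0 1 ((x-y)/2) (τ/2)) := by
  have hσ : 0 < (τ/2).im := im_half hτ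
  set G : ℤ × ℤ → ℂ := fun p =>
    thTerm 0 0 ((x+y)/2) (τ/2) p.1 * thTerm 0 1 ((x-y)/2) (τ/2) p.2 with hGdef
  have hG : Summable G :=
    summable_mul_of_summable_norm (summable_norm_thTerm hσ 0 0 ((x+y)/2))
      (summable_norm_thTerm hσ 0 1 ((x-y)/2))
  have hsplit := tsum_split G hG
  have hE : ∑' q : ℤ × ℤ, G (ψe q) = theta 0 1 x τ * theta 0 1 y τ := by
    rw [theta_mul 0 1 0 1 x y hτ]
    exact tsum_congr fun q => pwII_even x y q.1 q.2
  have hO : ∑' q : ℤ × ℤ, G (ψo q) = -(theta 1 1 x τ * theta 1 1 y τ) := by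
    rw [theta_mul 1 1 1 1 x y hτ, ← tsum_neg]
    exact tsum_congr fun q => pwII_odd x y q.1 q.2
  have hL : ∑' p : ℤ × ℤ, G p
      = theta 0 0 ((x+y)/2) (τ/2) * theta 0 1 ((x-y)/2) (τ/2) :=
    (theta_mul 0 0 0 1 ((x+y)/2) ((x-y)/2) hσ).symm
  rw [hE, hO] at hsplit
  linear_combination hsplit - hL

/-- Identity (III). -/
lemma idIII {τ : ℂ} (hτ : 0 < τ.im) (x y : ℂ) :
    2 * (theta 1 1 x τ * theta 1 1 y τ)
      = theta 0 1 ((x+y)/2) (τ/2) * theta 0 0 ((x-y)/2) (τ/2)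
        - theta 0 0 ((x+y)/2) (τ/2) * theta 0 1 ((x-y)/2) (τ/2) := by
  have hσ : 0 < (τ/2).im := im_half hτ
  set G : ℤ × ℤ → ℂ := fun p =>
    thTerm 0 1 ((x+y)/2) (τ/2) p.1 * thTerm 0 0 ((x-y)/2) (τ/2) p.2
      - thTerm 0 0 ((x+y)/2) (τ/2) p.1 * thTerm 0 1 ((x-y)/2) (τ/2) p.2 with hGdef
  have hs1 := summable_mul_of_summable_norm (summable_norm_thTerm hσ 0 1 ((x+y)/2))
      (summable_norm_thTerm hσ 0 0 ((x-y)/2))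
  have hs2 := summable_mul_of_summable_norm (summable_norm_thTerm hσ 0 0 ((x+y)/2))
      (summable_norm_thTerm hσ 0 1 ((x-y)/2))
  have hG : Summable G := hs1.sub hs2
  have hsplit := tsum_split G hG
  have hE : ∑' q : ℤ × ℤ, G (ψe q) = 0 := by
    rw [← tsum_zero]
    refine tsum_congr fun q => ?_
    show thTerm 0 1 ((x+y)/2) (τ/2) (q.1+q.2) * thTerm 0 0 ((x-y)/2) (τ/2) (q.1-q.2)
      - thTerm 0 0 ((x+y)/2) (τ/2) (q.1+q.2) * thTerm 0 1 ((x-y)/2) (τ/2) (q.1-q.2) = 0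
    rw [sub_eq_zero]
    exact pwIII_even x y q.1 q.2
  have hO : ∑' q : ℤ × ℤ, G (ψo q) = 2 * (theta 1 1 x τ * theta 1 1 y τ) := by
    rw [theta_mul 1 1 1 1 x y hτ, ← tsum_mul_left]
    refine tsum_congr fun q => ?_
    show thTerm 0 1 ((x+y)/2) (τ/2) (q.1+q.2+1) * thTerm 0 0 ((x-y)/2) (τ/2) (q.1-q.2)
      - thTerm 0 0 ((x+y)/2) (τ/2) (q.1+q.2+1) * thTerm 0 1 ((x-y)/2) (τ/2) (q.1-q.2)
      = 2 * (thTerm 1 1 x τ q.1 * thTerm 1 1 y τ q.2)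
    rw [pwIII_odd1 x y q.1 q.2, pwIII_odd2 x y q.1 q.2]
    ring
  have hL : ∑' p : ℤ × ℤ, G p
      = theta 0 1 ((x+y)/2) (τ/2) * theta 0 0 ((x-y)/2) (τ/2)
        - theta 0 0 ((x+y)/2) (τ/2) * theta 0 1 ((x-y)/2) (τ/2) := by
    rw [theta_mul 0 1 0 0 ((x+y)/2) ((x-y)/2) hσ,
      theta_mul 0 0 0 1 ((x+y)/2) ((x-y)/2) hσ]
    exact hs1.tsum_sub hs2
  rw [hE, hO] at hsplit
  linear_combination hL - hsplit

lemma theta00_even (z τ : ℂ) : theta 0 0 (-z) τ = theta 0 0 z τ := by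
  rw [theta_eq_tsum, theta_eq_tsum, ← Equiv.tsum_eq (Equiv.neg ℤ) (thTerm 0 0 z τ)]
  refine tsum_congr fun n => ?_
  show thTerm 0 0 (-z) τ n = thTerm 0 0 z τ (-n)
  simp only [thTerm]
  refine cexp_eq_cexp 0 ?_
  push_cast; ring

lemma theta01_even (z τ : ℂ) : theta 0 1 (-z) τ = theta 0 1 z τ := by
  rw [theta_eq_tsum, theta_eq_tsum, ← Equiv.tsum_eq (Equiv.neg ℤ) (thTerm 0 1 z τ)]
  refine tsum_congr fun n => ?_
  show thTerm 0 1 (-z) τ n = thTerm 0 1 z τ (-n)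
  simp only [thTerm]
  refine cexp_eq_cexp n ?_
  push_cast; ring



/-- The core scalar identity behind the difference-operator equation. -/
lemma core {τ : ℂ} (hτ : 0 < τ.im) (lam u z c : ℂ) :
    (-theta 0 0 (lam/2) (τ/2) * (theta 1 0 u τ * theta 1 0 (2*z-2*c) τ
          - theta 0 0 u τ * theta 0 0 (2*z-2*c) τ)
        + theta 0 1 (lam/2) (τ/2) * (theta 1 1 u τ * theta 1 1 (2*z-2*c) τ
          - theta 0 1 u τ * theta 0 1 (2*z-2*c) τ))
      * theta 1 1 (-z+((lam+u)/2-c)) τ * theta 1 1 (z+((lam+u)/2-c)+4*c) τ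
    - (-theta 0 0 (lam/2) (τ/2) * (theta 1 0 u τ * theta 1 0 (-(2*z)-2*c) τ
          - theta 0 0 u τ * theta 0 0 (-(2*z)-2*c) τ)
        + theta 0 1 (lam/2) (τ/2) * (theta 1 1 u τ * theta 1 1 (-(2*z)-2*c) τ
          - theta 0 1 u τ * theta 0 1 (-(2*z)-2*c) τ))
      * theta 1 1 (z+((lam+u)/2-c)) τ * theta 1 1 (-z+((lam+u)/2-c)+4*c) τ
    = theta 0 1 (lam/2+2*c) (τ/2) * (2 * theta 1 1 (u+2*c) τ) * theta 1 1 (2*z) τ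
        * theta 1 1 (z+((lam+u)/2-c)) τ * theta 1 1 (-z+((lam+u)/2-c)) τ := by
  have e1 := idI hτ u (2*z-2*c)
  have e2 := idII hτ u (2*z-2*c)
  have e3 := idI hτ u (-(2*z)-2*c)
  have e4 := idII hτ u (-(2*z)-2*c)
  have e5 := idIII hτ (z+((lam+u)/2-c)) (lam/2-(u/2+z-c))
  have e6 := idIII hτ (-z+((lam+u)/2-c)) (lam/2-(u/2-z-c))
  have e7 := idIII hτ (z+((lam+u)/2-c)+4*c) (lam/2-(u/2+z-c))
  have e8 := idIII hτ (-z+((lam+u)/2-c)+4*c) (lam/2-(u/2-z-c))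
  have e9 := idIII hτ (u+2*c) (2*z)
  rw [show (u+(2*z-2*c))/2 = u/2+z-c by ring, show (u-(2*z-2*c))/2 = u/2-z+c by ring] at e1 e2
  rw [show (u+(-(2*z)-2*c))/2 = u/2-z-c by ring,
    show (u-(-(2*z)-2*c))/2 = u/2+z+c by ring] at e3 e4
  rw [show ((z+((lam+u)/2-c))+(lam/2-(u/2+z-c)))/2 = lam/2 by ring,
    show ((z+((lam+u)/2-c))-(lam/2-(u/2+z-c)))/2 = u/2+z-c by ring] at e5
  rw [show ((-z+((lam+u)/2-c))+(lam/2-(u/2-z-c)))/2 = lam/2 by ring,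
    show ((-z+((lam+u)/2-c))-(lam/2-(u/2-z-c)))/2 = u/2-z-c by ring] at e6
  rw [show ((z+((lam+u)/2-c)+4*c)+(lam/2-(u/2+z-c)))/2 = lam/2+2*c by ring,
    show ((z+((lam+u)/2-c)+4*c)-(lam/2-(u/2+z-c)))/2 = u/2+z+c by ring] at e7
  rw [show ((-z+((lam+u)/2-c)+4*c)+(lam/2-(u/2-z-c)))/2 = lam/2+2*c by ring,
    show ((-z+((lam+u)/2-c)+4*c)-(lam/2-(u/2-z-c)))/2 = u/2-z+c by ring] at e8
  rw [show ((u+2*c)+2*z)/2 = u/2+z+c by ring, show ((u+2*c)-2*z)/2 = u/2-z+c by ring] at e9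
  linear_combination
    (-theta 0 0 (lam/2) (τ/2) * theta 1 1 (-z+((lam+u)/2-c)) τ
        * theta 1 1 (z+((lam+u)/2-c)+4*c) τ) * e1
    + (theta 0 1 (lam/2) (τ/2) * theta 1 1 (-z+((lam+u)/2-c)) τ
        * theta 1 1 (z+((lam+u)/2-c)+4*c) τ) * e2
    + (theta 0 0 (lam/2) (τ/2) * theta 1 1 (z+((lam+u)/2-c)) τ
        * theta 1 1 (-z+((lam+u)/2-c)+4*c) τ) * e3
    + (-theta 0 1 (lam/2) (τ/2) * theta 1 1 (z+((lam+u)/2-c)) τ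
        * theta 1 1 (-z+((lam+u)/2-c)+4*c) τ) * e4
    + (theta 1 1 (-z+((lam+u)/2-c)) τ * theta 1 1 (z+((lam+u)/2-c)+4*c) τ
        * theta 0 1 (u/2-z+c) (τ/2)) * e5
    + (-(theta 1 1 (z+((lam+u)/2-c)) τ * theta 1 1 (-z+((lam+u)/2-c)+4*c) τ
        * theta 0 1 (u/2+z+c) (τ/2))) * e6
    + (-(theta 1 1 (z+((lam+u)/2-c)) τ * theta 1 1 (-z+((lam+u)/2-c)) τ
        * theta 0 1 (u/2-z+c) (τ/2))) * e7
    + (theta 1 1 (z+((lam+u)/2-c)) τ * theta 1 1 (-z+((lam+u)/2-c)) τ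
        * theta 0 1 (u/2+z+c) (τ/2)) * e8
    + (-(theta 1 1 (z+((lam+u)/2-c)) τ * theta 1 1 (-z+((lam+u)/2-c)) τ
        * theta 0 1 (lam/2+2*c) (τ/2))) * e9


set_option maxHeartbeats 2000000 in
/-- Main computation for the `ε = +1` shape (arbitrary `lam`). -/
lemma main' (τ η l : ℂ) (hτ : 0 < τ.im) (tl : ℕ) (htl : 0 < tl) (hl : (tl:ℂ) = 2*l)
    (lam u : ℂ) (h2 : theta 0 1 (lam/2) (τ/2) ≠ 0)
    (h11 : theta 1 1 η τ ≠ 0) (h10 : theta 1 0 η τ ≠ 0)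
    (h00 : theta 0 0 η τ ≠ 0) (h01 : theta 0 1 η τ ≠ 0)
    (z : ℂ) (hz : theta 1 1 (2*z) τ ≠ 0) :
    ((-theta 0 0 (lam/2) (τ/2) / theta 0 1 (lam/2) (τ/2)) • (W1 η τ u • rhoS η τ l (s1f η τ)
          + (Complex.I * W2 η τ u) • rhoS η τ l (s2f η τ))
      + W0 η τ u • rhoS η τ l (s0f η τ) - W3 η τ u • rhoS η τ l (s3f η τ))
      (fun w => brK η τ w ((lam+u)/2 + (-l+1)*η) tl) z
    = (theta 0 1 ((lam + 4*l*η)/2) (τ/2) / theta 0 1 (lam/2) (τ/2)) *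
        (2 * theta 1 1 (u + 2*l*η) τ) * brK η τ z ((lam+(u-2*η))/2 + (-l+1)*η) tl := by
  obtain ⟨k, rfl⟩ : ∃ k, tl = k + 1 := ⟨tl - 1, by omega⟩
  have hk : (k:ℂ) + 1 = 2*l := by push_cast at hl; exact hl
  set Qz := ∏ j ∈ Finset.range k, theta 1 1 (z+((lam+u)/2-l*η)+2*(((j+1:ℕ)):ℂ)*η) τ with hQz
  set Qm := ∏ j ∈ Finset.range k, theta 1 1 (-z+((lam+u)/2-l*η)+2*(((j+1:ℕ)):ℂ)*η) τ with hQm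
  have hcast : ((k+1:ℕ):ℂ) = 2*l := by push_cast; exact hk
  have hzP : ∏ j ∈ Finset.range (k+1), theta 1 1 (z+((lam+u)/2-l*η)+2*((j:ℕ):ℂ)*η) τ
      = Qz * theta 1 1 (z+((lam+u)/2-l*η)) τ := by
    rw [Finset.prod_range_succ' (fun j => theta 1 1 (z+((lam+u)/2-l*η)+2*((j:ℕ):ℂ)*η) τ) k]
    rw [show z+((lam+u)/2-l*η)+2*(((0:ℕ)):ℂ)*η = z+((lam+u)/2-l*η) by push_cast; ring]
  have hmP : ∏ j ∈ Finset.range (k+1), theta 1 1 (-z+((lam+u)/2-l*η)+2*((j:ℕ):ℂ)*η) τ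
      = Qm * theta 1 1 (-z+((lam+u)/2-l*η)) τ := by
    rw [Finset.prod_range_succ' (fun j => theta 1 1 (-z+((lam+u)/2-l*η)+2*((j:ℕ):ℂ)*η) τ) k]
    rw [show -z+((lam+u)/2-l*η)+2*(((0:ℕ)):ℂ)*η = -z+((lam+u)/2-l*η) by push_cast; ring]
  have hzS : ∏ j ∈ Finset.range (k+1), theta 1 1 (z+((lam+u)/2-l*η)+2*(((j+1:ℕ)):ℂ)*η) τ
      = Qz * theta 1 1 (z+((lam+u)/2-l*η)+4*(l*η)) τ := by
    rw [Finset.prod_range_succ (fun j => theta 1 1 (z+((lam+u)/2-l*η)+2*(((j+1:ℕ)):ℂ)*η) τ) k]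
    rw [show z+((lam+u)/2-l*η)+2*(((k+1:ℕ)):ℂ)*η = z+((lam+u)/2-l*η)+4*(l*η) by
      rw [hcast]; ring]
  have hmS : ∏ j ∈ Finset.range (k+1), theta 1 1 (-z+((lam+u)/2-l*η)+2*(((j+1:ℕ)):ℂ)*η) τ
      = Qm * theta 1 1 (-z+((lam+u)/2-l*η)+4*(l*η)) τ := by
    rw [Finset.prod_range_succ (fun j => theta 1 1 (-z+((lam+u)/2-l*η)+2*(((j+1:ℕ)):ℂ)*η) τ) k]
    rw [show -z+((lam+u)/2-l*η)+2*(((k+1:ℕ)):ℂ)*η = -z+((lam+u)/2-l*η)+4*(l*η) by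
      rw [hcast]; ring]
  have hBp : brK η τ (z+η) ((lam+u)/2 + (-l+1)*η) (k+1)
      = (Qz * theta 1 1 (z+((lam+u)/2-l*η)+4*(l*η)) τ)
        * (Qm * theta 1 1 (-z+((lam+u)/2-l*η)) τ) := by
    rw [brK, Finset.prod_mul_distrib]
    congr 1
    · rw [← hzS]
      refine Finset.prod_congr rfl fun j _ => ?_
      rw [show z+η+((lam+u)/2+(-l+1)*η)+2*((j:ℕ):ℂ)*η
          = z+((lam+u)/2-l*η)+2*(((j+1:ℕ)):ℂ)*η by push_cast; ring]
    · rw [← hmP]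
      refine Finset.prod_congr rfl fun j _ => ?_
      rw [show -(z+η)+((lam+u)/2+(-l+1)*η)+2*((j:ℕ):ℂ)*η
          = -z+((lam+u)/2-l*η)+2*((j:ℕ):ℂ)*η by push_cast; ring]
  have hBm : brK η τ (z-η) ((lam+u)/2 + (-l+1)*η) (k+1)
      = (Qz * theta 1 1 (z+((lam+u)/2-l*η)) τ)
        * (Qm * theta 1 1 (-z+((lam+u)/2-l*η)+4*(l*η)) τ) := by
    rw [brK, Finset.prod_mul_distrib]
    congr 1
    · rw [← hzP]
      refine Finset.prod_congr rfl fun j _ => ?_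
      rw [show z-η+((lam+u)/2+(-l+1)*η)+2*((j:ℕ):ℂ)*η
          = z+((lam+u)/2-l*η)+2*((j:ℕ):ℂ)*η by push_cast; ring]
    · rw [← hmS]
      refine Finset.prod_congr rfl fun j _ => ?_
      rw [show -(z-η)+((lam+u)/2+(-l+1)*η)+2*((j:ℕ):ℂ)*η
          = -z+((lam+u)/2-l*η)+2*(((j+1:ℕ)):ℂ)*η by push_cast; ring]
  have hB0 : brK η τ z ((lam+(u-2*η))/2 + (-l+1)*η) (k+1)
      = (Qz * theta 1 1 (z+((lam+u)/2-l*η)) τ)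
        * (Qm * theta 1 1 (-z+((lam+u)/2-l*η)) τ) := by
    rw [brK, Finset.prod_mul_distrib]
    congr 1
    · rw [← hzP]
      refine Finset.prod_congr rfl fun j _ => ?_
      rw [show z+((lam+(u-2*η))/2+(-l+1)*η)+2*((j:ℕ):ℂ)*η
          = z+((lam+u)/2-l*η)+2*((j:ℕ):ℂ)*η by push_cast; ring]
    · rw [← hmP]
      refine Finset.prod_congr rfl fun j _ => ?_
      rw [show -z+((lam+(u-2*η))/2+(-l+1)*η)+2*((j:ℕ):ℂ)*η
          = -z+((lam+u)/2-l*η)+2*((j:ℕ):ℂ)*η by push_cast; ring]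
  have hcore := core hτ lam u z (l*η)
  simp only [LinearMap.add_apply, LinearMap.sub_apply, LinearMap.smul_apply, Pi.add_apply,
    Pi.sub_apply, Pi.smul_apply, smul_eq_mul, rhoS, LinearMap.coe_mk, AddHom.coe_mk,
    W0, W1, W2, W3, s0f, s1f, s2f, s3f]
  rw [hBp, hBm, hB0]
  rw [show 2*(z - l*η) = 2*z-2*(l*η) by ring, show 2*(-z - l*η) = -(2*z)-2*(l*η) by ring,
    show (lam + 4*l*η)/2 = lam/2+2*(l*η) by ring, show u + 2*l*η = u+2*(l*η) by ring]
  set D := theta 0 0 (lam/2) (τ/2) with hsD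
  set E := theta 0 1 (lam/2) (τ/2) with hsE
  set L1 := theta 0 1 (lam/2+2*(l*η)) (τ/2) with hsL1
  set T10u := theta 1 0 u τ with hs1
  set T00u := theta 0 0 u τ with hs2
  set T11u := theta 1 1 u τ with hs3
  set T01u := theta 0 1 u τ with hs4
  set T10p := theta 1 0 (2*z-2*(l*η)) τ with hs5
  set T00p := theta 0 0 (2*z-2*(l*η)) τ with hs6
  set T11p := theta 1 1 (2*z-2*(l*η)) τ with hs7
  set T01p := theta 0 1 (2*z-2*(l*η)) τ with hs8
  set T10m := theta 1 0 (-(2*z)-2*(l*η)) τ with hs9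
  set T00m := theta 0 0 (-(2*z)-2*(l*η)) τ with hs10
  set T11m := theta 1 1 (-(2*z)-2*(l*η)) τ with hs11
  set T01m := theta 0 1 (-(2*z)-2*(l*η)) τ with hs12
  set Tx := theta 1 1 (z+((lam+u)/2-l*η)) τ with hs13
  set Ty := theta 1 1 (-z+((lam+u)/2-l*η)) τ with hs14
  set Txc := theta 1 1 (z+((lam+u)/2-l*η)+4*(l*η)) τ with hs15
  set Tyc := theta 1 1 (-z+((lam+u)/2-l*η)+4*(l*η)) τ with hs16
  set Tu2c := theta 1 1 (u+2*(l*η)) τ with hs17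
  set T2z := theta 1 1 (2*z) τ with hs18
  set E11 := theta 1 1 η τ with hs19
  set E10 := theta 1 0 η τ with hs20
  set E00 := theta 0 0 η τ with hs21
  set E01 := theta 0 1 η τ with hs22
  field_simp [h2, h11, h10, h00, h01, hz]
  have hK : E * (E10 * T2z * (E00 * T2z)) * (E11 * T2z) ≠ 0 := by
    exact mul_ne_zero (mul_ne_zero h2 (mul_ne_zero (mul_ne_zero h10 hz)
      (mul_ne_zero h00 hz))) (mul_ne_zero h11 hz)
  linear_combination (Qz * Qm) * hcore
    + (-D * Qz * Qm * T00u * (Txc * Ty * T00p - Tx * Tyc * T00m)) * Complex.I_sq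

end SklyaninAux

/-- The operator δ acts on `f_ε(λ,u,·)` with eigenfactor and shift `u ↦ u-2η`. -/
theorem stmt2 (τ η l : ℂ) (hτ : 0 < τ.im) (tl : ℕ) (htl : 0 < tl) (hl : (tl:ℂ) = 2*l)
    (ε : ℂ) (hε : ε = 1 ∨ ε = -1) (lam u : ℂ)
    (h1 : theta 0 1 ((lam + 4*ε*l*η)/2) (τ/2) ≠ 0)
    (h2 : theta 0 1 (lam/2) (τ/2) ≠ 0)
    (h11 : theta 1 1 η τ ≠ 0) (h10 : theta 1 0 η τ ≠ 0)
    (h00 : theta 0 0 η τ ≠ 0) (h01 : theta 0 1 η τ ≠ 0)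
    (p : ℂ)
    (hp : p = -theta 0 0 (lam/2) (τ/2) / theta 0 1 (lam/2) (τ/2)) :
    ∀ z : ℂ, theta 1 1 (2*z) τ ≠ 0 →
      (p • (W1 η τ u • rhoS η τ l (s1f η τ)
              + (Complex.I * W2 η τ u) • rhoS η τ l (s2f η τ))
        + W0 η τ u • rhoS η τ l (s0f η τ) - W3 η τ u • rhoS η τ l (s3f η τ))
        (fun w => fEps η τ l tl ε lam u w) z
      = (theta 0 1 ((lam + 4*ε*l*η)/2) (τ/2) / theta 0 1 (lam/2) (τ/2)) *
          (2 * theta 1 1 (u + 2*l*η) τ) * fEps η τ l tl ε lam (u - 2*η) z := by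
  rcases hε with rfl | rfl
  · intro z hz
    subst hp
    simp only [fEps]
    simp only [show ((1:ℂ)*lam+u)/2 + (-l+1)*η = (lam+u)/2 + (-l+1)*η from by ring,
      show ((1:ℂ)*lam+(u-2*η))/2 + (-l+1)*η = (lam+(u-2*η))/2 + (-l+1)*η from by ring,
      show (lam+4*(1:ℂ)*l*η)/2 = (lam+4*l*η)/2 from by ring]
    exact SklyaninAux.main' τ η l hτ tl htl hl lam u h2 h11 h10 h00 h01 z hz
  · intro z hz
    subst hp
    have h2' : theta 0 1 ((-lam)/2) (τ/2) ≠ 0 := by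
      rw [show ((-lam)/2 : ℂ) = -(lam/2) by ring, SklyaninAux.theta01_even]
      exact h2
    simp only [fEps]
    simp only [show ((-1:ℂ)*lam+u)/2 + (-l+1)*η = (-lam+u)/2 + (-l+1)*η from by ring,
      show ((-1:ℂ)*lam+(u-2*η))/2 + (-l+1)*η = (-lam+(u-2*η))/2 + (-l+1)*η from by ring,
      show (lam+4*(-1:ℂ)*l*η)/2 = -((-lam+4*l*η)/2) from by ring,
      show lam/2 = -((-lam)/2) from by ring,
      SklyaninAux.theta01_even, SklyaninAux.theta00_even]
    exact SklyaninAux.main' τ η l hτ tl htl hl (-lam) u h2' h11 h10 h00 h01 z hz
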